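/- arXiv:1401.7091 — 2 statements merged into one kernel-verified Lean document; each statement's English description precedes it below -/
import Mathlib

section
/- Let D be a simple digraph on n ≥ 2 vertices with outdegree sequence d_1^+ ≥ d_2^+ ≥ … ≥ d_n^+. Define φ_1 = 2 d_1^+ and, for 2 ≤ l ≤ n, φ_l = (d_1^+ + 2 d_l^+ − 1 + sqrt((2 d_l^+ − d_1^+ + 1)^2 + 8 Σ_{i=1}^{l−1}(d_i^+ − d_l^+)))/2. Let φ_s = min_{1 ≤ l ≤ n} φ_l for some s ∈ {1,…,n}. Then q(D) ≤ φ_s. Furthermore, if D is strongly connected, then q(D) = φ_s if and only if either all outdegrees of D are equal (D is regular), or there exists an integer t with 2 ≤ t ≤ s such that d_1^+ = … = d_{t−1}^+ > d_t^+ = … = d_n^+ and each of the t−1 vertices of largest outdegree has indegree n−1. -/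
open Matrix

namespace SignlessDigraph

variable {n : ℕ}

/-- Real adjacency matrix of a (multi)digraph on `Fin n`, given by arc multiplicities. -/
def adjMat (W : Fin n → Fin n → ℕ) : Matrix (Fin n) (Fin n) ℝ :=
  fun i j => (W i j : ℝ)

/-- Outdegree of a vertex. -/
def outdeg (W : Fin n → Fin n → ℕ) (i : Fin n) : ℕ := ∑ j, W i j

/-- Indegree of a vertex. -/
def indeg (W : Fin n → Fin n → ℕ) (i : Fin n) : ℕ := ∑ j, W j i

/-- The signless Laplacian matrix `Q(D) = diag(outdegrees) + A(D)`. -/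
noncomputable def Qmat (W : Fin n → Fin n → ℕ) : Matrix (Fin n) (Fin n) ℝ :=
  Matrix.diagonal (fun i => (outdeg W i : ℝ)) + adjMat W

/-- Spectral radius of a real matrix: the maximum modulus of its (complex) eigenvalues. -/
noncomputable def radius (M : Matrix (Fin n) (Fin n) ℝ) : ℝ :=
  sSup {r : ℝ | ∃ μ ∈ spectrum ℂ (M.map ((↑) : ℝ → ℂ)), r = ‖μ‖}

/-- The signless Laplacian spectral radius `q(D)`. -/
noncomputable def q (W : Fin n → Fin n → ℕ) : ℝ := radius (Qmat W)

/-- The (adjacency) spectral radius `ρ(D)`. -/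
noncomputable def rho (W : Fin n → Fin n → ℕ) : ℝ := radius (adjMat W)

/-- A digraph is simple: no loops and no multiple arcs. -/
def Simple (W : Fin n → Fin n → ℕ) : Prop :=
  (∀ i, W i i = 0) ∧ ∀ i j, W i j ≤ 1

/-- Strong connectivity: every vertex is reachable from every vertex by a directed path. -/
def StronglyConnected (W : Fin n → Fin n → ℕ) : Prop :=
  ∀ i j : Fin n, Relation.ReflTransGen (fun a b => W a b ≠ 0) i j

/-- Isomorphism of digraphs on `Fin n`. -/
def Iso (W W' : Fin n → Fin n → ℕ) : Prop :=
  ∃ e : Fin n ≃ Fin n, ∀ i j, W (e i) (e j) = W' i j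

/-- The clique number: maximum size of a set of vertices with all arcs in both directions. -/
noncomputable def cliqueNum (W : Fin n → Fin n → ℕ) : ℕ :=
  sSup {d : ℕ | ∃ s : Finset (Fin n), s.card = d ∧ ∀ i ∈ s, ∀ j ∈ s, i ≠ j → W i j ≠ 0}

/-- `W` has a directed cycle of length `c`. -/
def HasCycleLen (W : Fin n → Fin n → ℕ) (c : ℕ) : Prop :=
  ∃ (hc : 2 ≤ c) (p : Fin c → Fin n), Function.Injective p ∧
    ∀ i : Fin c, W (p i) (p ⟨((i : ℕ) + 1) % c, Nat.mod_lt _ (by omega)⟩) ≠ 0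

/-- The girth: length of a shortest directed cycle. -/
noncomputable def girth (W : Fin n → Fin n → ℕ) : ℕ := sInf {c | HasCycleLen W c}

/-- The complete digraph `K_n^↔`. -/
def Kcomp (n : ℕ) : Fin n → Fin n → ℕ := fun i j => if i = j then 0 else 1

/-- The directed cycle `C_n^→`, with arcs `i → i+1 (mod n)`. -/
def cyc (n : ℕ) : Fin n → Fin n → ℕ := fun i j => if (j : ℕ) = ((i : ℕ) + 1) % n then 1 else 0

/-- The digraph `B_{n,d}` (for `2 ≤ d ≤ n-1`): a complete digraph on the vertices
`0, …, d-1` together with a directed path `0 → d → d+1 → ⋯ → n-1 → 1`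
(the path `u_1 u_2 ⋯ u_{n-d+2}` with `u_1 = 0`, `u_{n-d+2} = 1`,
and internal vertices `d, …, n-1`). -/
def B (n d : ℕ) : Fin n → Fin n → ℕ := fun i j =>
  if i ≠ j ∧ (i : ℕ) < d ∧ (j : ℕ) < d then 1
  else if (i : ℕ) = 0 ∧ (j : ℕ) = d then 1
  else if d ≤ (i : ℕ) ∧ (j : ℕ) = (i : ℕ) + 1 then 1
  else if (i : ℕ) = n - 1 ∧ (j : ℕ) = 1 then 1
  else 0

/-- `B'_{n,d} = B_{n,d} − (u_{n-d+1}, u_{n-d+2}) + (u_{n-d+1}, u_1)`, i.e. the arc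
`n-1 → 1` is replaced by the arc `n-1 → 0`. -/
def B' (n d : ℕ) : Fin n → Fin n → ℕ := fun i j =>
  if (i : ℕ) = n - 1 ∧ (j : ℕ) = 1 then 0
  else if (i : ℕ) = n - 1 ∧ (j : ℕ) = 0 then 1
  else B n d i j

/-- The digraph `C_{n,g}` (for `2 ≤ g ≤ n-1`): vertices `u_1, …, u_n` are `0, …, n-1`,
with arcs `i → i+1` for `0 ≤ i ≤ n-2` together with the arcs `g-1 → 0` and `n-1 → 0`. -/
def Cng (n g : ℕ) : Fin n → Fin n → ℕ := fun i j =>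
  if (j : ℕ) = (i : ℕ) + 1 then 1
  else if ((i : ℕ) = g - 1 ∨ (i : ℕ) = n - 1) ∧ (j : ℕ) = 0 then 1
  else 0

/-- `C'_{n,g} = C_{n,g} − (u_n, u_1) + (u_n, u_g)`, i.e. the arc `n-1 → 0` is replaced by
the arc `n-1 → g-1`. -/
def Cng' (n g : ℕ) : Fin n → Fin n → ℕ := fun i j =>
  if (i : ℕ) = n - 1 ∧ (j : ℕ) = 0 then 0
  else if (i : ℕ) = n - 1 ∧ (j : ℕ) = g - 1 then 1
  else Cng n g i j

/-- The θ-digraph `θ(a,b,c)` realized on `Fin n` (intended for `n = a + b + c + 2`):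
vertex `0` is the common initial vertex of the paths `P_{a+2}`, `P_{b+2}` and terminal
vertex of `P_{c+2}`; vertex `1` is the common terminal vertex of `P_{a+2}`, `P_{b+2}`
and initial vertex of `P_{c+2}`; the internal vertices of the three paths are
`2, …, a+1`, `a+2, …, a+b+1` and `a+b+2, …, a+b+c+1` respectively. -/
def theta (n a b c : ℕ) : Fin n → Fin n → ℕ := fun i j =>
  if ((a = 0 ∧ (i : ℕ) = 0 ∧ (j : ℕ) = 1) ∨
      (a ≠ 0 ∧ (((i : ℕ) = 0 ∧ (j : ℕ) = 2) ∨
        (2 ≤ (i : ℕ) ∧ (i : ℕ) ≤ a ∧ (j : ℕ) = (i : ℕ) + 1) ∨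
        ((i : ℕ) = a + 1 ∧ (j : ℕ) = 1))) ∨
      (b = 0 ∧ (i : ℕ) = 0 ∧ (j : ℕ) = 1) ∨
      (b ≠ 0 ∧ (((i : ℕ) = 0 ∧ (j : ℕ) = a + 2) ∨
        (a + 2 ≤ (i : ℕ) ∧ (i : ℕ) ≤ a + b ∧ (j : ℕ) = (i : ℕ) + 1) ∨
        ((i : ℕ) = a + b + 1 ∧ (j : ℕ) = 1))) ∨
      (c = 0 ∧ (i : ℕ) = 1 ∧ (j : ℕ) = 0) ∨
      (c ≠ 0 ∧ (((i : ℕ) = 1 ∧ (j : ℕ) = a + b + 2) ∨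
        (a + b + 2 ≤ (i : ℕ) ∧ (i : ℕ) ≤ a + b + c ∧ (j : ℕ) = (i : ℕ) + 1) ∨
        ((i : ℕ) = a + b + c + 1 ∧ (j : ℕ) = 0))))
  then 1 else 0

/-- The digraph `K→(n,k,m)`: the vertex set is partitioned into
`V₁ = {0,…,m-1}`, `S = {m,…,m+k-1}`, `V₂ = {m+k,…,n-1}`; it is the complete digraph
with all arcs from `V₂` to `V₁` removed. -/
def Kdir (n k m : ℕ) : Fin n → Fin n → ℕ := fun i j =>
  if i = j then 0
  else if m + k ≤ (i : ℕ) ∧ (j : ℕ) < m then 0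
  else 1

/-- The digraph `D_{uv}` obtained from `D` by deleting the arc `(u,v)`, identifying `u`
with `v` (the merged vertex is `v`; the vertex `u` becomes isolated) and deleting
multiple arcs (and loops). -/
def contract (W : Fin n → Fin n → ℕ) (u v : Fin n) : Fin n → Fin n → ℕ :=
  fun i j =>
    if i = u ∨ j = u ∨ i = j then 0
    else if i = v then min 1 (W v j + W u j)
    else if j = v then min 1 (W i v + W i u)
    else min 1 (W i j)

/-- The digraph `D^w` obtained from `D` by subdividing the arc `(u,v)` with a new
vertex `w` (realized as the last vertex of `Fin (n+1)`). -/
def subdivide (W : Fin n → Fin n → ℕ) (u v : Fin n) : Fin (n + 1) → Fin (n + 1) → ℕ :=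
  fun i j =>
    if hi : (i : ℕ) < n then
      if hj : (j : ℕ) < n then
        if (⟨(i : ℕ), hi⟩ : Fin n) = u ∧ (⟨(j : ℕ), hj⟩ : Fin n) = v then 0
        else W ⟨(i : ℕ), hi⟩ ⟨(j : ℕ), hj⟩
      else if (⟨(i : ℕ), hi⟩ : Fin n) = u then 1 else 0
    else
      if hj : (j : ℕ) < n then (if (⟨(j : ℕ), hj⟩ : Fin n) = v then 1 else 0)
      else 0



/-! ### Auxiliary lemmas for the proof -/

section SpectralAux

lemma mem_spectrum_iff_eigen (M : Matrix (Fin n) (Fin n) ℂ) (μ : ℂ) :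
    μ ∈ spectrum ℂ M ↔ ∃ z : Fin n → ℂ, z ≠ 0 ∧ M.mulVec z = μ • z := by
  rw [← AlgEquiv.spectrum_eq (Matrix.toLinAlgEquiv' (R := ℂ) (n := Fin n)) M,
    ← Module.End.hasEigenvalue_iff_mem_spectrum, Module.End.hasEigenvalue_iff,
    Submodule.ne_bot_iff]
  constructor
  · rintro ⟨z, hz, hz0⟩
    refine ⟨z, hz0, ?_⟩
    have := Module.End.mem_eigenspace_iff.mp hz
    simpa [Matrix.toLinAlgEquiv'_apply] using this
  · rintro ⟨z, hz0, hz⟩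
    refine ⟨z, ?_, hz0⟩
    rw [Module.End.mem_eigenspace_iff]
    simpa [Matrix.toLinAlgEquiv'_apply] using hz

lemma abs_eigen_le {M : Matrix (Fin n) (Fin n) ℝ} (hM : ∀ i j, 0 ≤ M i j)
    {x : Fin n → ℝ} (hx : ∀ i, 0 < x i) {r : ℝ}
    (hr : ∀ i, ∑ j, M i j * x j ≤ r * x i) {μ : ℂ}
    (hμ : μ ∈ spectrum ℂ (M.map ((↑) : ℝ → ℂ))) : ‖μ‖ ≤ r := by
  obtain ⟨z, hz0, hzz⟩ := (mem_spectrum_iff_eigen _ μ).mp hμ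
  set u : Fin n → ℝ := fun i => ‖z i‖ with hu
  obtain ⟨i0, hi0⟩ := Function.ne_iff.mp hz0
  have hi0' : z i0 ≠ 0 := by simpa using hi0
  have hne : (Finset.univ : Finset (Fin n)).Nonempty := ⟨i0, Finset.mem_univ _⟩
  obtain ⟨k, -, hk⟩ := Finset.exists_max_image Finset.univ (fun i => u i / x i) hne
  have hkpos : 0 < u k / x k := by
    have h1 : 0 < u i0 / x i0 := div_pos (by simpa [hu] using hi0') (hx i0)
    exact h1.trans_le (hk i0 (Finset.mem_univ i0))
  have huk : 0 < u k := by
    have := mul_pos hkpos (hx k)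
    rwa [div_mul_cancel₀ _ (hx k).ne'] at this
  have hglob : ∀ j, u j ≤ u k / x k * x j := by
    intro j
    have h2 := hk j (Finset.mem_univ j)
    calc u j = u j / x j * x j := (div_mul_cancel₀ _ (hx j).ne').symm
    _ ≤ u k / x k * x j := mul_le_mul_of_nonneg_right h2 (hx j).le
  have hrow : ‖μ‖ * u k ≤ r * u k := by
    have h3 : (M.map ((↑) : ℝ → ℂ)).mulVec z k = μ * z k := by
      rw [hzz]; rfl
    have h4 : ‖μ‖ * u k = ‖∑ j, (M k j : ℂ) * z j‖ := by
      rw [← norm_mul, ← h3]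
      simp [Matrix.mulVec, dotProduct, Matrix.map_apply]
    rw [h4]
    calc ‖∑ j, (M k j : ℂ) * z j‖ ≤ ∑ j, ‖(M k j : ℂ) * z j‖ :=
          norm_sum_le _ _
    _ = ∑ j, M k j * u j := by
        refine Finset.sum_congr rfl fun j _ => ?_
        rw [norm_mul, Complex.norm_real, Real.norm_eq_abs, abs_of_nonneg (hM k j)]
    _ ≤ ∑ j, M k j * (u k / x k * x j) := by
        refine Finset.sum_le_sum fun j _ => mul_le_mul_of_nonneg_left (hglob j) (hM k j)
    _ = u k / x k * ∑ j, M k j * x j := by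
        rw [Finset.mul_sum]; refine Finset.sum_congr rfl fun j _ => by ring
    _ ≤ u k / x k * (r * x k) := mul_le_mul_of_nonneg_left (hr k) hkpos.le
    _ = r * u k := by
        rw [show u k / x k * (r * x k) = r * (u k / x k * x k) by ring,
          div_mul_cancel₀ _ (hx k).ne']
  exact le_of_mul_le_mul_right hrow huk

lemma radius_le {M : Matrix (Fin n) (Fin n) ℝ} (hM : ∀ i j, 0 ≤ M i j)
    {x : Fin n → ℝ} (hx : ∀ i, 0 < x i) {r : ℝ} (hr0 : 0 ≤ r)
    (hr : ∀ i, ∑ j, M i j * x j ≤ r * x i) : radius M ≤ r := by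
  apply Real.sSup_le _ hr0
  rintro y ⟨μ, hμ, rfl⟩
  exact abs_eigen_le hM hx hr hμ

lemma bddAbove_radiusSet {M : Matrix (Fin n) (Fin n) ℝ} (hM : ∀ i j, 0 ≤ M i j)
    {x : Fin n → ℝ} (hx : ∀ i, 0 < x i) {r : ℝ}
    (hr : ∀ i, ∑ j, M i j * x j ≤ r * x i) :
    BddAbove {s : ℝ | ∃ μ ∈ spectrum ℂ (M.map ((↑) : ℝ → ℂ)), s = ‖μ‖} := by
  refine ⟨r, ?_⟩
  rintro y ⟨μ, hμ, rfl⟩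
  exact abs_eigen_le hM hx hr hμ

lemma real_eigen_le_radius {M : Matrix (Fin n) (Fin n) ℝ} {σ : ℝ} {x : Fin n → ℝ}
    (hx0 : x ≠ 0) (hx : M.mulVec x = σ • x)
    (hbd : BddAbove {s : ℝ | ∃ μ ∈ spectrum ℂ (M.map ((↑) : ℝ → ℂ)), s = ‖μ‖}) :
    σ ≤ radius M := by
  have hmem : (σ : ℂ) ∈ spectrum ℂ (M.map ((↑) : ℝ → ℂ)) := by
    rw [mem_spectrum_iff_eigen]
    refine ⟨fun i => (x i : ℂ), ?_, ?_⟩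
    · intro h
      apply hx0
      funext i
      have := congrFun h i
      simpa using this
    · funext i
      have hxi := congrFun hx i
      simp only [Matrix.mulVec, dotProduct, Matrix.map_apply] at hxi ⊢
      rw [show ∑ j, (M i j : ℂ) * (x j : ℂ) = ((∑ j, M i j * x j : ℝ) : ℂ) by push_cast; ring]
      rw [hxi]
      push_cast
      simp [mul_comm]
  calc σ ≤ |σ| := le_abs_self σ
  _ ≤ radius M := by
      apply le_csSup hbd
      exact ⟨(σ : ℂ), hmem, by simp⟩

lemma spectrum_matrix_finite (M : Matrix (Fin n) (Fin n) ℂ) :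
    (spectrum ℂ M).Finite := by
  rw [← AlgEquiv.spectrum_eq (Matrix.toLinAlgEquiv' (R := ℂ) (n := Fin n)) M]
  have : spectrum ℂ (Matrix.toLinAlgEquiv' M) =
      {μ | Module.End.HasEigenvalue (Matrix.toLinAlgEquiv' M) μ} := by
    ext μ
    exact (Module.End.hasEigenvalue_iff_mem_spectrum).symm
  rw [this]
  exact Module.End.finite_hasEigenvalue _

lemma spectrum_matrix_nonempty (hn : 0 < n) (M : Matrix (Fin n) (Fin n) ℂ) :
    (spectrum ℂ M).Nonempty := by
  haveI : Nonempty (Fin n) := Fin.pos_iff_nonempty.mp hn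
  rw [← AlgEquiv.spectrum_eq (Matrix.toLinAlgEquiv' (R := ℂ) (n := Fin n)) M]
  obtain ⟨μ, hμ⟩ := Module.End.exists_eigenvalue (Matrix.toLinAlgEquiv' M)
  exact ⟨μ, Module.End.hasEigenvalue_iff_mem_spectrum.mp hμ⟩

lemma radius_mem (hn : 0 < n) (M : Matrix (Fin n) (Fin n) ℝ) :
    ∃ μ ∈ spectrum ℂ (M.map ((↑) : ℝ → ℂ)), radius M = ‖μ‖ := by
  have hE : {r : ℝ | ∃ μ ∈ spectrum ℂ (M.map ((↑) : ℝ → ℂ)), r = ‖μ‖} =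
      (fun μ => ‖μ‖) '' spectrum ℂ (M.map ((↑) : ℝ → ℂ)) := by
    ext y; constructor
    · rintro ⟨μ, h1, rfl⟩; exact ⟨μ, h1, rfl⟩
    · rintro ⟨μ, h1, rfl⟩; exact ⟨μ, h1, rfl⟩
  have hfin : {r : ℝ | ∃ μ ∈ spectrum ℂ (M.map ((↑) : ℝ → ℂ)), r = ‖μ‖}.Finite := by
    rw [hE]; exact (spectrum_matrix_finite _).image _
  have hne : {r : ℝ | ∃ μ ∈ spectrum ℂ (M.map ((↑) : ℝ → ℂ)), r = ‖μ‖}.Nonempty := by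
    obtain ⟨μ, hμ⟩ := spectrum_matrix_nonempty hn (M.map ((↑) : ℝ → ℂ))
    exact ⟨‖μ‖, μ, hμ, rfl⟩
  exact hne.csSup_mem hfin

lemma rows_tight {M : Matrix (Fin n) (Fin n) ℝ} (hn : 0 < n) (hM : ∀ i j, 0 ≤ M i j)
    {x : Fin n → ℝ} (hx : ∀ i, 0 < x i) {r : ℝ}
    (hr : ∀ i, ∑ j, M i j * x j ≤ r * x i)
    (hsc : ∀ i j : Fin n, Relation.ReflTransGen (fun a b => 0 < M a b) i j)
    (hrad : radius M = r) : ∀ i, ∑ j, M i j * x j = r * x i := by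
  obtain ⟨μ, hμ, hrabs⟩ := radius_mem hn M
  rw [hrad] at hrabs
  obtain ⟨z, hz0, hzz⟩ := (mem_spectrum_iff_eigen _ μ).mp hμ
  set u : Fin n → ℝ := fun i => ‖z i‖ with hu
  obtain ⟨i0, hi0⟩ := Function.ne_iff.mp hz0
  have hi0' : z i0 ≠ 0 := by simpa using hi0
  have hne : (Finset.univ : Finset (Fin n)).Nonempty := ⟨i0, Finset.mem_univ _⟩
  obtain ⟨k, -, hk⟩ := Finset.exists_max_image Finset.univ (fun i => u i / x i) hne
  set m := u k / x k with hm
  have hmpos : 0 < m := by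
    have h1 : 0 < u i0 / x i0 := div_pos (by simpa [hu] using hi0') (hx i0)
    exact h1.trans_le (hk i0 (Finset.mem_univ i0))
  have hglob : ∀ j, u j ≤ m * x j := by
    intro j
    have h2 := hk j (Finset.mem_univ j)
    calc u j = u j / x j * x j := (div_mul_cancel₀ _ (hx j).ne').symm
    _ ≤ m * x j := mul_le_mul_of_nonneg_right h2 (hx j).le
  have key : ∀ i, u i = m * x i →
      (∑ j, M i j * x j = r * x i ∧ ∀ b, 0 < M i b → u b = m * x b) := by
    intro i hui
    have h3 : (M.map ((↑) : ℝ → ℂ)).mulVec z i = μ * z i := by rw [hzz]; rfl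
    have c1 : r * u i ≤ ∑ j, M i j * u j := by
      have h4 : r * u i = ‖∑ j, (M i j : ℂ) * z j‖ := by
        rw [hrabs, ← norm_mul, ← h3]
        simp [Matrix.mulVec, dotProduct, Matrix.map_apply]
      rw [h4]
      calc ‖∑ j, (M i j : ℂ) * z j‖ ≤ ∑ j, ‖(M i j : ℂ) * z j‖ :=
            norm_sum_le _ _
      _ = ∑ j, M i j * u j := by
          refine Finset.sum_congr rfl fun j _ => ?_
          rw [norm_mul, Complex.norm_real, Real.norm_eq_abs, abs_of_nonneg (hM i j)]
    have c2 : ∑ j, M i j * u j ≤ ∑ j, M i j * (m * x j) :=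
      Finset.sum_le_sum fun j _ => mul_le_mul_of_nonneg_left (hglob j) (hM i j)
    have c3 : ∑ j, M i j * (m * x j) ≤ r * u i := by
      have : ∑ j, M i j * (m * x j) = m * ∑ j, M i j * x j := by
        rw [Finset.mul_sum]; exact Finset.sum_congr rfl fun j _ => by ring
      rw [this, hui]
      calc m * ∑ j, M i j * x j ≤ m * (r * x i) := mul_le_mul_of_nonneg_left (hr i) hmpos.le
      _ = r * (m * x i) := by ring
    have e2 : ∑ j, M i j * u j = ∑ j, M i j * (m * x j) := le_antisymm c2 (c3.trans c1)
    have e3 : ∑ j, M i j * (m * x j) = r * u i := le_antisymm c3 (c1.trans c2)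
    constructor
    · have : m * ∑ j, M i j * x j = m * (r * x i) := by
        have h5 : ∑ j, M i j * (m * x j) = m * ∑ j, M i j * x j := by
          rw [Finset.mul_sum]; exact Finset.sum_congr rfl fun j _ => by ring
        rw [← h5, e3, hui]; ring
      exact mul_left_cancel₀ hmpos.ne' this
    · intro b hb
      have hterm : ∀ j ∈ Finset.univ, M i j * u j ≤ M i j * (m * x j) :=
        fun j _ => mul_le_mul_of_nonneg_left (hglob j) (hM i j)
      have := (Finset.sum_eq_sum_iff_of_le hterm).mp e2 b (Finset.mem_univ b)
      exact mul_left_cancel₀ hb.ne' this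
  have hall : ∀ i, u i = m * x i := by
    intro i
    have hki := hsc k i
    induction hki with
    | refl => rw [hm]; rw [div_mul_cancel₀ _ (hx k).ne']
    | tail hab hbc ih => exact (key _ ih).2 _ hbc
  intro i
  exact (key i (hall i)).1

end SpectralAux

section CombAux

lemma Qmat_nonneg (W : Fin n → Fin n → ℕ) (i j : Fin n) : 0 ≤ Qmat W i j := by
  unfold Qmat
  simp only [Matrix.add_apply, Matrix.diagonal_apply, adjMat]
  positivity

lemma Qmat_pos_of_arc (W : Fin n → Fin n → ℕ) {i j : Fin n} (h : W i j ≠ 0) :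
    0 < Qmat W i j := by
  unfold Qmat
  simp only [Matrix.add_apply, Matrix.diagonal_apply, adjMat]
  have h1 : (0:ℝ) < (W i j : ℝ) := by exact_mod_cast Nat.pos_of_ne_zero h
  have h2 : (0:ℝ) ≤ (if i = j then ((outdeg W i : ℝ)) else 0) := by positivity
  linarith

lemma sumW (W : Fin n → Fin n → ℕ) (i : Fin n) : ∑ j, (W i j : ℝ) = (outdeg W i : ℝ) := by
  unfold outdeg; push_cast; ring

lemma Qrow (W : Fin n → Fin n → ℕ) (x : Fin n → ℝ) (i : Fin n) :
    ∑ j, Qmat W i j * x j = (outdeg W i : ℝ) * x i + ∑ j, (W i j : ℝ) * x j := by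
  unfold Qmat
  simp only [Matrix.add_apply, Matrix.diagonal_apply, adjMat, add_mul, Finset.sum_add_distrib, ite_mul,
    zero_mul]
  rw [Finset.sum_ite_eq Finset.univ i (fun j => (outdeg W i : ℝ) * x j)]
  simp

/-- The test vector with cutoff `L` and slope `c`. -/
noncomputable def tvec (W : Fin n → Fin n → ℕ) (L : Fin n) (c : ℝ) : Fin n → ℝ :=
  fun j => if (j:ℕ) < (L:ℕ) then 1 + c * ((outdeg W j : ℝ) - (outdeg W L : ℝ)) else 1

/-- The truncated neighborhood sum. -/
noncomputable def tsum (W : Fin n → Fin n → ℕ) (L : Fin n) (i : Fin n) : ℝ :=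
  ∑ j ∈ Finset.Iio L, (W i j : ℝ) * ((outdeg W j : ℝ) - (outdeg W L : ℝ))

lemma Qrow_testvec (W : Fin n → Fin n → ℕ) (L : Fin n) (c : ℝ) (i : Fin n) :
    ∑ j, Qmat W i j * tvec W L c j
      = (outdeg W i : ℝ) * tvec W L c i + ((outdeg W i : ℝ) + c * tsum W L i) := by
  rw [Qrow]
  congr 1
  have hxalt : ∀ j : Fin n, tvec W L c j
      = 1 + (if j ∈ Finset.Iio L then c * ((outdeg W j : ℝ) - (outdeg W L : ℝ)) else 0) := by
    intro j
    unfold tvec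
    by_cases h : (j:ℕ) < (L:ℕ)
    · rw [if_pos h, if_pos (Finset.mem_Iio.mpr (show j < L from h))]
    · rw [if_neg h, if_neg (show ¬ j ∈ Finset.Iio L from
        fun hc => h (show j < L from Finset.mem_Iio.mp hc)), add_zero]
  simp only [hxalt]
  have hprod : ∀ j : Fin n, (W i j : ℝ) * (1 + (if j ∈ Finset.Iio L
      then c * ((outdeg W j : ℝ) - (outdeg W L : ℝ)) else 0)) = (W i j : ℝ) +
      (if j ∈ Finset.Iio L then c * ((W i j : ℝ) * ((outdeg W j : ℝ) - (outdeg W L : ℝ)))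
        else 0) := fun j => by by_cases h : j ∈ Finset.Iio L <;> simp [h] <;> ring
  simp only [hprod]
  rw [Finset.sum_add_distrib, sumW, Finset.sum_ite_mem, Finset.univ_inter, ← Finset.mul_sum]
  rfl

lemma sum_ite_ne {α : Type*} [DecidableEq α] {s : Finset α} {i : α} (hi : i ∈ s) (f : α → ℝ) :
    ∑ j ∈ s, (if j = i then 0 else f j) = ∑ j ∈ s, f j - f i := by
  rw [Finset.sum_eq_sum_sdiff_singleton_add hi (fun j => if j = i then 0 else f j),
    Finset.sum_eq_sum_sdiff_singleton_add hi f]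
  simp only [if_pos rfl, add_zero]
  have : ∀ j ∈ s \ {i}, (if j = i then 0 else f j) = f j := by
    intro j hj
    rw [if_neg (by simpa using (Finset.mem_sdiff.mp hj).2)]
  rw [Finset.sum_congr rfl this]
  simp

/-- `Sp W L i`: the maximal possible value of `tsum W L i`. -/
noncomputable def Sp (W : Fin n → Fin n → ℕ) (L i : Fin n) : ℝ :=
  ∑ j ∈ Finset.Iio L, (if j = i then 0 else ((outdeg W j : ℝ) - (outdeg W L : ℝ)))

lemma Sp_eq_of_not_mem {W : Fin n → Fin n → ℕ} {L i : Fin n} (h : i ∉ Finset.Iio L) :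
    Sp W L i = ∑ j ∈ Finset.Iio L, ((outdeg W j : ℝ) - (outdeg W L : ℝ)) := by
  unfold Sp
  refine Finset.sum_congr rfl fun j hj => ?_
  rw [if_neg (fun he => h (by rw [← he]; exact hj))]

lemma Sp_eq_of_mem {W : Fin n → Fin n → ℕ} {L i : Fin n} (h : i ∈ Finset.Iio L) :
    Sp W L i = (∑ j ∈ Finset.Iio L, ((outdeg W j : ℝ) - (outdeg W L : ℝ)))
      - ((outdeg W i : ℝ) - (outdeg W L : ℝ)) := sum_ite_ne h _

lemma tsum_le_Sp {W : Fin n → Fin n → ℕ} (hW : Simple W)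
    (hmono : ∀ i j : Fin n, i ≤ j → outdeg W j ≤ outdeg W i) (L i : Fin n) :
    tsum W L i ≤ Sp W L i := by
  refine Finset.sum_le_sum fun j hj => ?_
  have he : 0 ≤ (outdeg W j : ℝ) - (outdeg W L : ℝ) := by
    have h0 := hmono j L (le_of_lt (Finset.mem_Iio.mp hj))
    have : (outdeg W L : ℝ) ≤ (outdeg W j : ℝ) := by exact_mod_cast h0
    linarith
  by_cases h : j = i
  · subst h
    rw [if_pos rfl, hW.1 j]
    simp
  · rw [if_neg h]
    have h1 : (W i j : ℝ) ≤ 1 := by exact_mod_cast hW.2 i j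
    nlinarith [Nat.cast_nonneg (α := ℝ) (W i j)]

lemma Sp_le_S {W : Fin n → Fin n → ℕ}
    (hmono : ∀ i j : Fin n, i ≤ j → outdeg W j ≤ outdeg W i) (L i : Fin n) :
    Sp W L i ≤ ∑ j ∈ Finset.Iio L, ((outdeg W j : ℝ) - (outdeg W L : ℝ)) := by
  refine Finset.sum_le_sum fun j hj => ?_
  have h0 := hmono j L (le_of_lt (Finset.mem_Iio.mp hj))
  have he : (outdeg W L : ℝ) ≤ (outdeg W j : ℝ) := by exact_mod_cast h0
  by_cases h : j = i
  · rw [if_pos h]; linarith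
  · rw [if_neg h]

lemma tsum_tight {W : Fin n → Fin n → ℕ} (hW : Simple W)
    (hmono : ∀ i j : Fin n, i ≤ j → outdeg W j ≤ outdeg W i) {L i : Fin n}
    (h : tsum W L i = Sp W L i) :
    ∀ j ∈ Finset.Iio L, j ≠ i → outdeg W L < outdeg W j → W i j = 1 := by
  intro j hj hji hdj
  have hterm : ∀ k ∈ Finset.Iio L, (W i k : ℝ) * ((outdeg W k : ℝ) - (outdeg W L : ℝ))
      ≤ (if k = i then 0 else ((outdeg W k : ℝ) - (outdeg W L : ℝ))) := by
    intro k hk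
    have he : 0 ≤ (outdeg W k : ℝ) - (outdeg W L : ℝ) := by
      have h0 := hmono k L (le_of_lt (Finset.mem_Iio.mp hk))
      have : (outdeg W L : ℝ) ≤ (outdeg W k : ℝ) := by exact_mod_cast h0
      linarith
    by_cases hki : k = i
    · subst hki
      rw [if_pos rfl, hW.1 k]
      simp
    · rw [if_neg hki]
      have h1 : (W i k : ℝ) ≤ 1 := by exact_mod_cast hW.2 i k
      nlinarith [Nat.cast_nonneg (α := ℝ) (W i k)]
  have heq := (Finset.sum_eq_sum_iff_of_le hterm).mp h j hj
  rw [if_neg hji] at heq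
  have he : (0:ℝ) < (outdeg W j : ℝ) - (outdeg W L : ℝ) := by
    have : (outdeg W L : ℝ) < (outdeg W j : ℝ) := by exact_mod_cast hdj
    linarith
  have hw : (W i j : ℝ) = 1 :=
    mul_right_cancel₀ he.ne' (heq.trans (one_mul _).symm)
  exact_mod_cast hw

lemma indeg_eq_iff {W : Fin n → Fin n → ℕ} (hW : Simple W) (j : Fin n) :
    indeg W j = n - 1 ↔ ∀ i, i ≠ j → W i j = 1 := by
  have hcard : (Finset.univ.erase j).card = n - 1 := by
    rw [Finset.card_erase_of_mem (Finset.mem_univ j), Finset.card_univ, Fintype.card_fin]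
  have hsplit : indeg W j = ∑ i ∈ Finset.univ.erase j, W i j := by
    unfold indeg
    rw [← Finset.add_sum_erase Finset.univ (fun i => W i j) (Finset.mem_univ j), hW.1 j,
      zero_add]
  constructor
  · intro h i hij
    by_contra hne
    have h0 : W i j = 0 := Nat.lt_one_iff.mp (lt_of_le_of_ne (hW.2 i j) hne)
    have hi : i ∈ Finset.univ.erase j := Finset.mem_erase.mpr ⟨hij, Finset.mem_univ i⟩
    have hsum : ∑ k ∈ Finset.univ.erase j, W k j
        = ∑ k ∈ (Finset.univ.erase j).erase i, W k j := by
      rw [← Finset.add_sum_erase _ (fun k => W k j) hi, h0, zero_add]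
    have hle : ∑ k ∈ (Finset.univ.erase j).erase i, W k j
        ≤ ((Finset.univ.erase j).erase i).card := by
      apply Finset.sum_le_card_nsmul _ _ 1 (fun k _ => hW.2 k j) |>.trans
      simp
    have hc2 : ((Finset.univ.erase j).erase i).card = n - 2 := by
      rw [Finset.card_erase_of_mem hi, hcard]
      omega
    have hn2 : 2 ≤ n := by
      have hione : ({i, j} : Finset (Fin n)).card = 2 := by
        rw [Finset.card_insert_of_notMem (by simpa using hij), Finset.card_singleton]
      have h2 := Finset.card_le_univ ({i, j} : Finset (Fin n))
      rw [hione] at h2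
      simpa using h2
    rw [hsplit, hsum] at h
    omega
  · intro h
    rw [hsplit]
    calc ∑ i ∈ Finset.univ.erase j, W i j = ∑ i ∈ Finset.univ.erase j, 1 :=
          Finset.sum_congr rfl fun i hi => h i (Finset.mem_erase.mp hi).1
    _ = n - 1 := by rw [Finset.sum_const, smul_eq_mul, mul_one, hcard]

lemma root_facts {D0 DL S : ℝ} (hS : 0 ≤ S) (hDL : 0 ≤ DL)
    (hSzero : S = 0 → D0 = DL) {σ : ℝ}
    (hσ : σ = (D0 + 2*DL - 1 + Real.sqrt ((2*DL - D0 + 1)^2 + 8*S))/2) :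
    0 < σ - D0 + 1 ∧ (σ - 2*DL)*(σ - D0 + 1) = 2*S ∧ 2*DL ≤ σ := by
  set a : ℝ := 2*DL - D0 + 1 with ha
  set Δ : ℝ := a^2 + 8*S with hΔdef
  have hΔ : 0 ≤ Δ := by positivity
  set r : ℝ := Real.sqrt Δ with hrdef
  have hr2 : r^2 = Δ := Real.sq_sqrt hΔ
  have hr0 : 0 ≤ r := Real.sqrt_nonneg _
  have hra : |a| ≤ r := by
    rw [hrdef, ← Real.sqrt_sq_eq_abs]
    exact Real.sqrt_le_sqrt (by nlinarith)
  have hb : 0 < σ - D0 + 1 := by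
    have hform : σ - D0 + 1 = (a + r)/2 := by rw [hσ]; ring
    rcases lt_or_ge 0 a with h | h
    · rw [hform]; linarith
    · rcases lt_or_eq_of_le hS with hS' | hS'
      · have : |a| < r := by
          rw [hrdef, ← Real.sqrt_sq_eq_abs]
          exact Real.sqrt_lt_sqrt (sq_nonneg a) (by nlinarith)
        rw [hform]
        cases abs_cases a with
        | inl hc => linarith [hc.1]
        | inr hc => linarith [hc.1]
      · have hD : D0 = DL := hSzero hS'.symm
        rw [ha, hD] at h
        linarith
  refine ⟨hb, ?_, ?_⟩
  · have h1 : σ - 2*DL = (r - a)/2 := by rw [hσ]; ring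
    have h2 : σ - D0 + 1 = (a + r)/2 := by rw [hσ]; ring
    rw [h1, h2]
    nlinarith [hr2]
  · have h1 : σ - 2*DL = (r - a)/2 := by rw [hσ]; ring
    have := le_abs_self a
    linarith

lemma gap_small {σ c Di DL D0 T S xi : ℝ} (hxi : xi = 1 + c*(Di - DL))
    (hc : c * (σ - D0 + 1) = 2) (hcs : σ - 2*DL = c*S) :
    σ * xi - (Di * xi + (Di + c*T)) = c * ((S - (Di - DL) - T) + (D0 - Di)*(Di - DL)) := by
  subst hxi
  linear_combination hcs + (Di - DL) * hc

lemma gap_large {σ c Di DL T S : ℝ} (hcs : σ - 2*DL = c*S) :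
    σ * 1 - (Di * 1 + (Di + c*T)) = 2*(DL - Di) + c*(S - T) := by
  linear_combination hcs

end CombAux

/-- Master per-cutoff analysis: for `1 ≤ L`, with `σ = φ_L`, there is a positive slope `c`
such that the test vector `tvec W L c` witnesses `q(D) ≤ σ`, with explicit gap formulas. -/
lemma bound_package (hn : 2 ≤ n) {W : Fin n → Fin n → ℕ} (hW : Simple W)
    (hmono : ∀ i j : Fin n, i ≤ j → outdeg W j ≤ outdeg W i)
    {L : Fin n} (hL : 1 ≤ (L:ℕ)) {σ : ℝ}
    (hσ : σ = ((outdeg W ⟨0, by omega⟩ : ℝ) + 2 * (outdeg W L : ℝ) - 1 +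
        Real.sqrt ((2 * (outdeg W L : ℝ) - (outdeg W ⟨0, by omega⟩ : ℝ) + 1) ^ 2 +
          8 * ∑ i ∈ Finset.Iio L, ((outdeg W i : ℝ) - (outdeg W L : ℝ)))) / 2) :
    ∃ c : ℝ, 0 < c ∧ (∀ j, 1 ≤ tvec W L c j) ∧ 0 ≤ σ ∧
      (∀ i : Fin n, (i:ℕ) < (L:ℕ) →
        σ * tvec W L c i - ∑ j, Qmat W i j * tvec W L c j
          = c * (((∑ k ∈ Finset.Iio L, ((outdeg W k : ℝ) - (outdeg W L : ℝ)))
              - ((outdeg W i : ℝ) - (outdeg W L : ℝ)) - tsum W L i)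
            + ((outdeg W (⟨0, by omega⟩ : Fin n) : ℝ) - (outdeg W i : ℝ))
              * ((outdeg W i : ℝ) - (outdeg W L : ℝ)))) ∧
      (∀ i : Fin n, (L:ℕ) ≤ (i:ℕ) →
        σ * tvec W L c i - ∑ j, Qmat W i j * tvec W L c j
          = 2 * ((outdeg W L : ℝ) - (outdeg W i : ℝ))
            + c * ((∑ k ∈ Finset.Iio L, ((outdeg W k : ℝ) - (outdeg W L : ℝ))) - tsum W L i)) ∧
      (∀ i, ∑ j, Qmat W i j * tvec W L c j ≤ σ * tvec W L c i) := by
  set z0 : Fin n := ⟨0, by omega⟩ with hz0def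
  set D0 : ℝ := (outdeg W z0 : ℝ) with hD0def
  set DL : ℝ := (outdeg W L : ℝ) with hDLdef
  set S : ℝ := ∑ k ∈ Finset.Iio L, ((outdeg W k : ℝ) - (outdeg W L : ℝ)) with hSdef
  have hterm_nonneg : ∀ j ∈ Finset.Iio L, 0 ≤ (outdeg W j : ℝ) - (outdeg W L : ℝ) := by
    intro j hj
    have h0 := hmono j L (le_of_lt (Finset.mem_Iio.mp hj))
    have : (outdeg W L : ℝ) ≤ (outdeg W j : ℝ) := by exact_mod_cast h0
    linarith
  have hS0 : 0 ≤ S := Finset.sum_nonneg hterm_nonneg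
  have hDL0 : 0 ≤ DL := Nat.cast_nonneg _
  have hz0val : (z0:ℕ) = 0 := rfl
  have hz0mem : z0 ∈ Finset.Iio L := Finset.mem_Iio.mpr (show (z0:ℕ) < (L:ℕ) from by omega)
  have hSzero : S = 0 → D0 = DL := by
    intro h0
    have h0' : ∑ k ∈ Finset.Iio L, ((outdeg W k : ℝ) - (outdeg W L : ℝ)) = 0 := by
      rw [← hSdef]; exact h0
    have h1 := (Finset.sum_eq_zero_iff_of_nonneg hterm_nonneg).mp h0' z0 hz0mem
    rw [hD0def, hDLdef]
    linarith
  obtain ⟨hb, hquad, hge⟩ := root_facts hS0 hDL0 hSzero hσ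
  set c : ℝ := 2 / (σ - D0 + 1) with hcdef
  have hc : c * (σ - D0 + 1) = 2 := div_mul_cancel₀ _ hb.ne'
  have hcpos : 0 < c := div_pos two_pos hb
  have hcs : σ - 2*DL = c * S := by
    have h1 : (c * S) * (σ - D0 + 1) = 2 * S := by
      rw [show c * S * (σ - D0 + 1) = c * (σ - D0 + 1) * S by ring, hc]
    exact mul_right_cancel₀ hb.ne' (hquad.trans h1.symm)
  have hDle : ∀ i : Fin n, (outdeg W i : ℝ) ≤ D0 := by
    intro i
    have h0 := hmono z0 i (show z0 ≤ i from Nat.zero_le _)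
    rw [hD0def]
    exact_mod_cast h0
  have hx1 : ∀ j, 1 ≤ tvec W L c j := by
    intro j
    unfold tvec
    by_cases h : (j:ℕ) < (L:ℕ)
    · rw [if_pos h]
      have he : 0 ≤ (outdeg W j : ℝ) - (outdeg W L : ℝ) :=
        hterm_nonneg j (Finset.mem_Iio.mpr (show j < L from h))
      nlinarith
    · rw [if_neg h]
  have hσ0 : 0 ≤ σ := le_trans (by positivity) hge
  have hidS : ∀ i : Fin n, (i:ℕ) < (L:ℕ) →
      σ * tvec W L c i - ∑ j, Qmat W i j * tvec W L c j
        = c * ((S - ((outdeg W i : ℝ) - DL) - tsum W L i)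
          + (D0 - (outdeg W i : ℝ)) * ((outdeg W i : ℝ) - DL)) := by
    intro i hi
    rw [Qrow_testvec]
    have hxi : tvec W L c i = 1 + c * ((outdeg W i : ℝ) - DL) := by
      unfold tvec; rw [if_pos hi]
    rw [hxi]
    exact gap_small rfl hc hcs
  have hidL : ∀ i : Fin n, (L:ℕ) ≤ (i:ℕ) →
      σ * tvec W L c i - ∑ j, Qmat W i j * tvec W L c j
        = 2 * (DL - (outdeg W i : ℝ)) + c * (S - tsum W L i) := by
    intro i hi
    rw [Qrow_testvec]
    have hxi : tvec W L c i = 1 := by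
      unfold tvec; rw [if_neg (by omega)]
    rw [hxi]
    exact gap_large hcs
  refine ⟨c, hcpos, hx1, hσ0, hidS, hidL, ?_⟩
  intro i
  rcases lt_or_ge (i:ℕ) (L:ℕ) with h | h
  · have hid := hidS i h
    have hA : tsum W L i ≤ S - ((outdeg W i : ℝ) - DL) := by
      have h1 := tsum_le_Sp hW hmono L i
      have h2 := Sp_eq_of_mem (W := W) (show i ∈ Finset.Iio L from Finset.mem_Iio.mpr h)
      rw [h2] at h1
      exact h1
    have hB : 0 ≤ (D0 - (outdeg W i : ℝ)) * ((outdeg W i : ℝ) - DL) := by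
      have h1 := hDle i
      have h2 : DL ≤ (outdeg W i : ℝ) := by
        have h0 := hmono i L (show i ≤ L from le_of_lt h)
        rw [hDLdef]
        exact_mod_cast h0
      nlinarith
    nlinarith
  · have hid := hidL i h
    have hA : tsum W L i ≤ S := by
      have h1 := tsum_le_Sp hW hmono L i
      have h2 := Sp_le_S hmono L i
      rw [hSdef]
      linarith
    have hB : (outdeg W i : ℝ) ≤ DL := by
      have h0 := hmono L i (show L ≤ i from h)
      rw [hDLdef]
      exact_mod_cast h0
    nlinarith

/-- Upper bound `q(D) ≤ φ_s` for the minimal `φ_l`, together with the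
characterization of equality for strongly connected digraphs. Vertices are `0`-indexed:
vertex `0` has the largest outdegree, `φ` at index `0` is `2d_1^+`, and the paper's index
`l ∈ {1,…,n}` corresponds to the index `l-1 : Fin n`. -/
theorem q_le_phi {n : ℕ} (hn : 2 ≤ n) (W : Fin n → Fin n → ℕ) (hW : Simple W)
    (hmono : ∀ i j : Fin n, i ≤ j → outdeg W j ≤ outdeg W i)
    (phi : Fin n → ℝ)
    (hphi : ∀ l : Fin n, phi l =
      if (l : ℕ) = 0 then 2 * (outdeg W ⟨0, by omega⟩ : ℝ)
      else ((outdeg W ⟨0, by omega⟩ : ℝ) + 2 * (outdeg W l : ℝ) - 1 +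
        Real.sqrt ((2 * (outdeg W l : ℝ) - (outdeg W ⟨0, by omega⟩ : ℝ) + 1) ^ 2 +
          8 * ∑ i ∈ Finset.Iio l, ((outdeg W i : ℝ) - (outdeg W l : ℝ)))) / 2)
    (s : Fin n) (hs : ∀ l : Fin n, phi s ≤ phi l) :
    q W ≤ phi s ∧
    (StronglyConnected W →
      (q W = phi s ↔
        ((∀ i j : Fin n, outdeg W i = outdeg W j) ∨
          ∃ t : ℕ, 1 ≤ t ∧ t ≤ (s : ℕ) ∧
            (∀ i : Fin n, (i : ℕ) < t → outdeg W i = outdeg W ⟨0, by omega⟩) ∧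
            (∀ i : Fin n, t ≤ (i : ℕ) → outdeg W i < outdeg W ⟨0, by omega⟩) ∧
            (∀ i j : Fin n, t ≤ (i : ℕ) → t ≤ (j : ℕ) → outdeg W i = outdeg W j) ∧
            (∀ i : Fin n, (i : ℕ) < t → indeg W i = n - 1)))) := by
  have hnpos : 0 < n := by omega
  have hz0lt : (0:ℕ) < n := hnpos
  -- the top vertex
  have hDle : ∀ i : Fin n, (outdeg W i : ℝ) ≤ (outdeg W (⟨0, hz0lt⟩ : Fin n) : ℝ) := by
    intro i
    exact_mod_cast hmono ⟨0, hz0lt⟩ i (Nat.zero_le _)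
  rcases Nat.eq_zero_or_pos (s:ℕ) with hs0 | hs1
  case inl =>
    -- ## Case s = 0
    have hphis : phi s = 2 * (outdeg W (⟨0, hz0lt⟩ : Fin n) : ℝ) := by
      rw [hphi s, if_pos hs0]
    have hxpos : ∀ i : Fin n, 0 < (fun _ : Fin n => (1:ℝ)) i := fun i => one_pos
    have hrows : ∀ i, ∑ j, Qmat W i j * (fun _ : Fin n => (1:ℝ)) j
        ≤ phi s * (fun _ : Fin n => (1:ℝ)) i := by
      intro i
      rw [Qrow]
      simp only [mul_one]
      rw [sumW, hphis]
      have := hDle i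
      linarith
    have hphis0 : 0 ≤ phi s := by rw [hphis]; positivity
    have part1 : q W ≤ phi s := radius_le (Qmat_nonneg W) hxpos hphis0 hrows
    refine ⟨part1, ?_⟩
    intro hSC
    have hsc' : ∀ i j : Fin n, Relation.ReflTransGen (fun a b => 0 < Qmat W a b) i j :=
      fun i j => Relation.ReflTransGen.mono (p := fun a b => 0 < Qmat W a b)
          (fun a b (h : W a b ≠ 0) => Qmat_pos_of_arc W h) i j (hSC i j)
    have hbdd := bddAbove_radiusSet (Qmat_nonneg W) hxpos hrows
    constructor
    · intro hq
      left
      have htight := rows_tight hnpos (Qmat_nonneg W) hxpos hrows hsc' hq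
      have hdeq : ∀ i, outdeg W i = outdeg W (⟨0, hz0lt⟩ : Fin n) := by
        intro i
        have h1 := htight i
        rw [Qrow] at h1
        simp only [mul_one] at h1
        rw [sumW, hphis] at h1
        have h2 : (outdeg W i : ℝ) = (outdeg W (⟨0, hz0lt⟩ : Fin n) : ℝ) := by linarith
        exact_mod_cast h2
      exact fun i j => (hdeq i).trans (hdeq j).symm
    · rintro (hreg | ⟨t, ht1, hts, -⟩)
      · -- regular digraph: q = 2 d_1 = phi s
        have heig : Qmat W *ᵥ (fun _ : Fin n => (1:ℝ))
            = (2 * (outdeg W (⟨0, hz0lt⟩ : Fin n) : ℝ)) • (fun _ : Fin n => (1:ℝ)) := by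
          funext i
          show ∑ j, Qmat W i j * (fun _ : Fin n => (1:ℝ)) j = _
          rw [Qrow]
          simp only [mul_one, Pi.smul_apply, smul_eq_mul]
          rw [sumW]
          have : outdeg W i = outdeg W (⟨0, hz0lt⟩ : Fin n) := hreg i _
          rw [this]; ring
        have hx0 : (fun _ : Fin n => (1:ℝ)) ≠ 0 := by
          intro h
          have := congrFun h ⟨0, hz0lt⟩
          norm_num at this
        have hge := real_eigen_le_radius hx0 heig hbdd
        rw [hphis]
        exact le_antisymm (hphis ▸ part1) hge
      · omega
  case inr =>
    -- ## Case 1 ≤ s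
    have hsne : ¬ (s:ℕ) = 0 := by omega
    have hphis : phi s = ((outdeg W ⟨0, by omega⟩ : ℝ) + 2 * (outdeg W s : ℝ) - 1 +
        Real.sqrt ((2 * (outdeg W s : ℝ) - (outdeg W ⟨0, by omega⟩ : ℝ) + 1) ^ 2 +
          8 * ∑ i ∈ Finset.Iio s, ((outdeg W i : ℝ) - (outdeg W s : ℝ)))) / 2 := by
      rw [hphi s, if_neg hsne]
    obtain ⟨c, hcpos, hx1, hσ0, hidS, hidL, hrows⟩ := bound_package hn hW hmono hs1 hphis
    have hxpos : ∀ i, 0 < tvec W s c i := fun i => lt_of_lt_of_le one_pos (hx1 i)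
    have part1 : q W ≤ phi s := radius_le (Qmat_nonneg W) hxpos hσ0 hrows
    have hbdd := bddAbove_radiusSet (Qmat_nonneg W) hxpos hrows
    refine ⟨part1, ?_⟩
    intro hSC
    have hsc' : ∀ i j : Fin n, Relation.ReflTransGen (fun a b => 0 < Qmat W a b) i j :=
      fun i j => Relation.ReflTransGen.mono (p := fun a b => 0 < Qmat W a b)
          (fun a b (h : W a b ≠ 0) => Qmat_pos_of_arc W h) i j (hSC i j)
    constructor
    · -- ### forward direction: equality implies the structure
      intro hq
      by_cases hreg : ∀ i j : Fin n, outdeg W i = outdeg W j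
      · exact Or.inl hreg
      right
      have htight := rows_tight hnpos (Qmat_nonneg W) hxpos hrows hsc' hq
      -- small vertices: degrees equal d_s and full back-sums
      have hsmall : ∀ i : Fin n, (s:ℕ) ≤ (i:ℕ) → outdeg W i = outdeg W s ∧
          tsum W s i = ∑ k ∈ Finset.Iio s, ((outdeg W k : ℝ) - (outdeg W s : ℝ)) := by
        intro i hi
        have hid := hidL i hi
        rw [htight i, sub_self] at hid
        have hDi : (outdeg W i : ℝ) ≤ (outdeg W s : ℝ) := by
          exact_mod_cast hmono s i hi
        have hT : tsum W s i ≤ ∑ k ∈ Finset.Iio s, ((outdeg W k : ℝ) - (outdeg W s : ℝ)) :=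
          le_trans (tsum_le_Sp hW hmono s i) (Sp_le_S hmono s i)
        constructor
        · have : (outdeg W i : ℝ) = (outdeg W s : ℝ) := by nlinarith
          exact_mod_cast this
        · nlinarith
      have hbig2 : ∀ i : Fin n, (i:ℕ) < (s:ℕ) →
          (tsum W s i = (∑ k ∈ Finset.Iio s, ((outdeg W k : ℝ) - (outdeg W s : ℝ)))
            - ((outdeg W i : ℝ) - (outdeg W s : ℝ))) ∧
          (outdeg W i = outdeg W (⟨0, hz0lt⟩ : Fin n) ∨ outdeg W i = outdeg W s) := by
        intro i hi
        have hid := hidS i hi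
        rw [htight i, sub_self] at hid
        have hA : tsum W s i ≤ (∑ k ∈ Finset.Iio s, ((outdeg W k : ℝ) - (outdeg W s : ℝ)))
            - ((outdeg W i : ℝ) - (outdeg W s : ℝ)) := by
          have h1 := tsum_le_Sp hW hmono s i
          rwa [Sp_eq_of_mem (W := W) (Finset.mem_Iio.mpr (show i < s from hi))] at h1
        have hBl : (outdeg W i : ℝ) ≤ (outdeg W (⟨0, hz0lt⟩ : Fin n) : ℝ) := hDle i
        have hBr : (outdeg W s : ℝ) ≤ (outdeg W i : ℝ) := by
          exact_mod_cast hmono i s (le_of_lt (show i < s from hi))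
        have hB0 : ((outdeg W (⟨0, hz0lt⟩ : Fin n) : ℝ) - (outdeg W i : ℝ))
            * ((outdeg W i : ℝ) - (outdeg W s : ℝ)) = 0 := by nlinarith
        refine ⟨by nlinarith, ?_⟩
        rcases mul_eq_zero.mp hB0 with h | h
        · left
          have : (outdeg W i : ℝ) = (outdeg W (⟨0, hz0lt⟩ : Fin n) : ℝ) := by linarith
          exact_mod_cast this
        · right
          have : (outdeg W i : ℝ) = (outdeg W s : ℝ) := by linarith
          exact_mod_cast this
      have htsumSp : ∀ i : Fin n, tsum W s i = Sp W s i := by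
        intro i
        rcases lt_or_ge (i:ℕ) (s:ℕ) with h | h
        · rw [(hbig2 i h).1, Sp_eq_of_mem (W := W) (Finset.mem_Iio.mpr (show i < s from h))]
        · rw [(hsmall i h).2, Sp_eq_of_not_mem (W := W) (fun hc =>
            absurd (Finset.mem_Iio.mp hc) (by omega))]
      -- construct t
      have hFne : (Finset.univ.filter
          (fun i : Fin n => ¬ outdeg W i = outdeg W (⟨0, hz0lt⟩ : Fin n))).Nonempty := by
        push_neg at hreg
        obtain ⟨a, b, hab⟩ := hreg
        by_cases ha : outdeg W a = outdeg W (⟨0, hz0lt⟩ : Fin n)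
        · refine ⟨b, Finset.mem_filter.mpr ⟨Finset.mem_univ _, ?_⟩⟩
          intro hb
          exact hab (ha.trans hb.symm)
        · exact ⟨a, Finset.mem_filter.mpr ⟨Finset.mem_univ _, ha⟩⟩
      set m : Fin n := Finset.min' _ hFne with hmdef
      set t : ℕ := (m : ℕ) with htdef
      have hm : ¬ outdeg W m = outdeg W (⟨0, hz0lt⟩ : Fin n) :=
        (Finset.mem_filter.mp (Finset.min'_mem _ hFne)).2
      have hinit : ∀ i : Fin n, (i:ℕ) < t → outdeg W i = outdeg W (⟨0, hz0lt⟩ : Fin n) := by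
        intro i hi
        by_contra hne
        have : m ≤ i := Finset.min'_le _ i (Finset.mem_filter.mpr ⟨Finset.mem_univ _, hne⟩)
        have : (m:ℕ) ≤ (i:ℕ) := this
        omega
      have ht1 : 1 ≤ t := by
        rcases Nat.eq_zero_or_pos t with h | h
        · exfalso
          apply hm
          have : m = (⟨0, hz0lt⟩ : Fin n) := Fin.ext h
          rw [this]
        · exact h
      have hmlt : outdeg W m < outdeg W (⟨0, hz0lt⟩ : Fin n) :=
        lt_of_le_of_ne (hmono ⟨0, hz0lt⟩ m (Nat.zero_le _)) hm
      have hts : t ≤ (s:ℕ) := by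
        by_contra hst
        have hss : outdeg W s = outdeg W (⟨0, hz0lt⟩ : Fin n) := hinit s (by omega)
        apply hm
        have halleq : ∀ i : Fin n, outdeg W i = outdeg W (⟨0, hz0lt⟩ : Fin n) := by
          intro i
          rcases lt_or_ge (i:ℕ) (s:ℕ) with h | h
          · have h1 : outdeg W i ≤ outdeg W (⟨0, hz0lt⟩ : Fin n) :=
              hmono ⟨0, hz0lt⟩ i (Nat.zero_le _)
            have h2 : outdeg W s ≤ outdeg W i := hmono i s (le_of_lt (show i < s from h))
            omega
          · rw [(hsmall i h).1, hss]
        exact halleq m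
      have hallsmall : ∀ i : Fin n, t ≤ (i:ℕ) → outdeg W i = outdeg W s := by
        intro i hi
        rcases le_or_gt (s:ℕ) (i:ℕ) with h | h
        · exact (hsmall i h).1
        · rcases (hbig2 i h).2 with h1 | h1
          · exfalso
            have h2 : outdeg W i ≤ outdeg W m := hmono m i hi
            omega
          · exact h1
      have hslt : outdeg W s < outdeg W (⟨0, hz0lt⟩ : Fin n) := by
        have h1 : outdeg W m = outdeg W s := hallsmall m (le_refl _)
        omega
      have hind : ∀ j : Fin n, (j:ℕ) < t → indeg W j = n - 1 := by
        intro j hj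
        apply (indeg_eq_iff hW j).mpr
        intro i hij
        apply tsum_tight hW hmono (htsumSp i) j
          (Finset.mem_Iio.mpr (show j < s from by omega))
          (Ne.symm hij)
        rw [hinit j hj]
        exact hslt
      exact ⟨t, ht1, hts, hinit,
        (fun i hi => by rw [hallsmall i hi]; exact hslt),
        (fun i j hi hj => by rw [hallsmall i hi, hallsmall j hj]), hind⟩
    · -- ### backward direction: structure implies equality
      rintro (hreg | ⟨t, ht1, hts, hbig, hlt, heqsm, hindg⟩)
      · -- regular
        have h20 : phi s ≤ 2 * (outdeg W (⟨0, hz0lt⟩ : Fin n) : ℝ) := by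
          have h1 := hs ⟨0, hz0lt⟩
          rwa [hphi ⟨0, hz0lt⟩, if_pos rfl] at h1
        have heig : Qmat W *ᵥ (fun _ : Fin n => (1:ℝ))
            = (2 * (outdeg W (⟨0, hz0lt⟩ : Fin n) : ℝ)) • (fun _ : Fin n => (1:ℝ)) := by
          funext i
          show ∑ j, Qmat W i j * (fun _ : Fin n => (1:ℝ)) j = _
          rw [Qrow]
          simp only [mul_one, Pi.smul_apply, smul_eq_mul]
          rw [sumW]
          have : outdeg W i = outdeg W (⟨0, hz0lt⟩ : Fin n) := hreg i _
          rw [this]; ring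
        have hx0 : (fun _ : Fin n => (1:ℝ)) ≠ 0 := by
          intro h
          have := congrFun h ⟨0, hz0lt⟩
          norm_num at this
        have hge := real_eigen_le_radius hx0 heig hbdd
        exact le_antisymm part1 (le_trans h20 hge)
      · -- structured case: build an exact eigenvector for cutoff t
        have htn : t < n := by omega
        set L' : Fin n := ⟨t, htn⟩ with hL'def
        have hL'1 : 1 ≤ (L':ℕ) := ht1
        have hφL' : phi L' = ((outdeg W ⟨0, by omega⟩ : ℝ) + 2 * (outdeg W L' : ℝ) - 1 +
            Real.sqrt ((2 * (outdeg W L' : ℝ) - (outdeg W ⟨0, by omega⟩ : ℝ) + 1) ^ 2 +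
              8 * ∑ i ∈ Finset.Iio L', ((outdeg W i : ℝ) - (outdeg W L' : ℝ)))) / 2 := by
          rw [hphi L', if_neg (by omega)]
        obtain ⟨c', hc'pos, hx'1, hσ'0, hidS', hidL', hrows''⟩ :=
          bound_package hn hW hmono hL'1 hφL'
        have hW1 : ∀ (i j : Fin n), (j:ℕ) < t → i ≠ j → W i j = 1 :=
          fun i j hj hij => (indeg_eq_iff hW j).mp (hindg j hj) i hij
        have htsSp : ∀ i : Fin n, tsum W L' i = Sp W L' i := by
          intro i
          unfold tsum Sp
          refine Finset.sum_congr rfl fun j hj => ?_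
          have hjt' : j < L' := Finset.mem_Iio.mp hj
          have hjt : (j:ℕ) < t := hjt'
          by_cases hji : j = i
          · subst hji
            rw [if_pos rfl, hW.1 j, Nat.cast_zero, zero_mul]
          · rw [if_neg hji, hW1 i j hjt (Ne.symm hji), Nat.cast_one, one_mul]
        have hteq : ∀ i, ∑ j, Qmat W i j * tvec W L' c' j = phi L' * tvec W L' c' i := by
          intro i
          rcases lt_or_ge (i:ℕ) (L':ℕ) with h | h
          · have hid := hidS' i h
            have hA' : (∑ k ∈ Finset.Iio L', ((outdeg W k : ℝ) - (outdeg W L' : ℝ)))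
                - ((outdeg W i : ℝ) - (outdeg W L' : ℝ)) - tsum W L' i = 0 := by
              rw [htsSp i, Sp_eq_of_mem (W := W) (Finset.mem_Iio.mpr (show i < L' from h))]
              ring
            have hB' : (outdeg W (⟨0, hz0lt⟩ : Fin n) : ℝ) - (outdeg W i : ℝ) = 0 := by
              have h1 : outdeg W i = outdeg W (⟨0, hz0lt⟩ : Fin n) := hbig i h
              rw [h1]
              ring
            linear_combination (-1) * hid - c' * hA'
              - c' * ((outdeg W i : ℝ) - (outdeg W L' : ℝ)) * hB'
          · have hid := hidL' i h
            have hA' : (∑ k ∈ Finset.Iio L', ((outdeg W k : ℝ) - (outdeg W L' : ℝ)))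
                - tsum W L' i = 0 := by
              rw [htsSp i, Sp_eq_of_not_mem (W := W) (fun hc =>
                absurd (Finset.mem_Iio.mp hc) (by omega))]
              ring
            have hB' : (outdeg W L' : ℝ) - (outdeg W i : ℝ) = 0 := by
              have h1 : outdeg W i = outdeg W L' := heqsm i L' h (le_refl _)
              rw [h1]
              ring
            linear_combination (-1) * hid - c' * hA' - 2 * hB'
        have hmv : Qmat W *ᵥ tvec W L' c' = phi L' • tvec W L' c' := by
          funext i
          show ∑ j, Qmat W i j * tvec W L' c' j = _
          rw [hteq i]
          simp [Pi.smul_apply, smul_eq_mul]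
        have hx'0 : tvec W L' c' ≠ 0 := by
          intro h
          have h1 := hx'1 ⟨0, hz0lt⟩
          rw [congrFun h ⟨0, hz0lt⟩] at h1
          norm_num at h1
        have hge' : phi L' ≤ radius (Qmat W) := real_eigen_le_radius hx'0 hmv hbdd
        exact le_antisymm part1 (le_trans (hs L') hge')


end SignlessDigraph
end

section
/- Let D be a simple strongly connected digraph on n vertices that is not a directed cycle, and let u_1 u_2 ⋯ u_l (l ≥ 3) be a directed path in D such that the outdegree of u_i equals 1 for every i with 2 ≤ i ≤ l−1. Let x be the unique positive unit eigenvector of Q(D) corresponding to q(D), with x_i the coordinate at vertex u_i. Then x_2 < x_3 < ⋯ < x_{l−1} < x_l. -/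
open Matrix

namespace SignlessDigraph

variable {n : ℕ}

lemma row_eq {W : Fin n → Fin n → ℕ} {x : Fin n → ℝ}
    (hxeig : Qmat W *ᵥ x = q W • x) (v : Fin n) :
    q W * x v = (outdeg W v : ℝ) * x v + ∑ j, (W v j : ℝ) * x j := by
  have h := congrFun hxeig v
  rw [Qmat, add_mulVec] at h
  simp only [Pi.add_apply, mulVec_diagonal, Pi.smul_apply, smul_eq_mul] at h
  rw [← h]
  simp [adjMat, mulVec, dotProduct]

lemma outdeg_one_neighbor {W : Fin n → Fin n → ℕ} {v j0 : Fin n}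
    (hd : outdeg W v = 1) (hj0 : W v j0 ≠ 0) (k : Fin n) :
    W v k = if k = j0 then 1 else 0 := by
  have h1 : 1 ≤ W v j0 := Nat.one_le_iff_ne_zero.mpr hj0
  split_ifs with h
  · rw [h]
    have h2 : W v j0 ≤ outdeg W v :=
      Finset.single_le_sum (fun i _ => Nat.zero_le _) (Finset.mem_univ j0)
    omega
  · have : W v j0 + W v k ≤ outdeg W v := by
      have h3 : ∑ i ∈ ({j0, k} : Finset (Fin n)), W v i ≤ ∑ i, W v i :=
        Finset.sum_le_sum_of_subset (Finset.subset_univ _)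
      rwa [Finset.sum_pair (fun he => h he.symm)] at h3
    omega

lemma exists_neighbor {W : Fin n → Fin n → ℕ} {v : Fin n} (hd : 1 ≤ outdeg W v) :
    ∃ j, W v j ≠ 0 := by
  by_contra h
  push_neg at h
  have : outdeg W v = 0 := Finset.sum_eq_zero (fun j _ => h j)
  omega

lemma iso_cyc_of_outdeg_one {W : Fin n → Fin n → ℕ}
    (hsc : StronglyConnected W) (hn : 0 < n)
    (hd : ∀ i, outdeg W i = 1) : Iso W (cyc n) := by
  have hex : ∀ v : Fin n, ∃ j, W v j ≠ 0 := fun v => exists_neighbor (by rw [hd v])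
  choose f hf using hex
  have hWf : ∀ v k, W v k = if k = f v then 1 else 0 :=
    fun v k => outdeg_one_neighbor (hd v) (hf v) k
  have hreach : ∀ a b : Fin n, Relation.ReflTransGen (fun a b => W a b ≠ 0) a b →
      ∃ k, f^[k] a = b := by
    intro a b h
    induction h with
    | refl => exact ⟨0, rfl⟩
    | @tail b' c' _ hbc ih =>
      obtain ⟨k, hk⟩ := ih
      have hc : c' = f b' := by
        by_contra hne
        rw [hWf b' c', if_neg hne] at hbc
        exact hbc rfl
      exact ⟨k + 1, by rw [Function.iterate_succ_apply', hk, ← hc]⟩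
  set z : Fin n := ⟨0, hn⟩ with hz
  have hP : ∃ k, f^[k + 1] z = z := by
    obtain ⟨k, hk⟩ := hreach (f z) z (hsc (f z) z)
    exact ⟨k, by rw [Function.iterate_succ_apply]; exact hk⟩
  obtain ⟨m, hm0, hmZ, hmin⟩ :
      ∃ m, 0 < m ∧ f^[m] z = z ∧ ∀ k, 0 < k → k < m → f^[k] z ≠ z := by
    refine ⟨Nat.find hP + 1, Nat.succ_pos _, Nat.find_spec hP, ?_⟩
    intro k hk1 hk2 he
    exact Nat.find_min hP (m := k - 1) (by omega)
      (by rw [show k - 1 + 1 = k by omega]; exact he)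
  have hq : ∀ t, f^[m * t] z = z := by
    intro t
    induction t with
    | zero => simp
    | succ t ih => rw [Nat.mul_succ, Function.iterate_add_apply, hmZ]; exact ih
  have hper : ∀ k, f^[k] z = f^[k % m] z := by
    intro k
    conv_lhs => rw [← Nat.mod_add_div k m]
    rw [Function.iterate_add_apply, hq]
  have hinj : ∀ a b, a < m → b < m → f^[a] z = f^[b] z → a = b := by
    intro a b ha hb he
    by_contra hne
    rcases Nat.lt_or_ge a b with h | h
    · have hzz : f^[(m - b) + a] z = z := by
        rw [Function.iterate_add_apply, he, ← Function.iterate_add_apply,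
          show m - b + b = m by omega, hmZ]
      exact hmin _ (by omega) (by omega) hzz
    · have hba : b < a := by omega
      have hzz : f^[(m - a) + b] z = z := by
        rw [Function.iterate_add_apply, ← he, ← Function.iterate_add_apply,
          show m - a + a = m by omega, hmZ]
      exact hmin _ (by omega) (by omega) hzz
  have hsurj : ∀ j : Fin n, ∃ k, k < m ∧ f^[k] z = j := by
    intro j
    obtain ⟨k, hk⟩ := hreach z j (hsc z j)
    exact ⟨k % m, Nat.mod_lt _ hm0, by rw [← hper]; exact hk⟩
  have hmn : m = n := by
    have h1 : m ≤ n := by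
      have hi : Function.Injective (fun k : Fin m => f^[(k : ℕ)] z) := by
        intro a b he
        exact Fin.ext (hinj _ _ a.isLt b.isLt he)
      simpa using Fintype.card_le_of_injective _ hi
    have h2 : n ≤ m := by
      have hs : Function.Surjective (fun k : Fin m => f^[(k : ℕ)] z) := by
        intro j
        obtain ⟨k, hk, he⟩ := hsurj j
        exact ⟨⟨k, hk⟩, he⟩
      simpa using Fintype.card_le_of_surjective _ hs
    omega
  subst hmn
  have hbij : Function.Bijective (fun k : Fin m => f^[(k : ℕ)] z) :=
    ⟨fun a b he => Fin.ext (hinj _ _ a.isLt b.isLt he),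
     fun j => (hsurj j).elim (fun k hk => ⟨⟨k, hk.1⟩, hk.2⟩)⟩
  refine ⟨Equiv.ofBijective _ hbij, ?_⟩
  intro i j
  show W (f^[(i : ℕ)] z) (f^[(j : ℕ)] z) = cyc m i j
  rw [hWf]
  have hfi : f (f^[(i : ℕ)] z) = f^[((i : ℕ) + 1) % m] z := by
    rw [← hper]
    exact (Function.iterate_succ_apply' f (i : ℕ) z).symm
  unfold cyc
  by_cases hc : (j : ℕ) = ((i : ℕ) + 1) % m
  · rw [if_pos hc, if_pos]
    rw [hfi, hc]
  · rw [if_neg hc, if_neg]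
    intro he
    rw [hfi] at he
    exact hc (hinj _ _ j.isLt (Nat.mod_lt _ hm0) he)

/-- Along a directed path `u_1 u_2 ⋯ u_l` (here `0`-indexed as
`p 0, p 1, …, p (l-1)`) whose internal vertices `u_2, …, u_{l-1}` all have outdegree `1`,
the coordinates of the positive unit eigenvector of `Q(D)` satisfy
`x_{u_2} < x_{u_3} < ⋯ < x_{u_l}`. -/
theorem eigenvector_increasing_on_path {n l : ℕ} (W : Fin n → Fin n → ℕ) (hW : Simple W)
    (hsc : StronglyConnected W) (hnc : ¬ Iso W (cyc n)) (hl : 3 ≤ l)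
    (p : Fin l → Fin n) (hp : Function.Injective p)
    (hpath : ∀ i : ℕ, ∀ hi : i + 1 < l,
      W (p ⟨i, Nat.lt_of_succ_lt hi⟩) (p ⟨i + 1, hi⟩) ≠ 0)
    (hdeg : ∀ i : ℕ, ∀ hi : i < l, 1 ≤ i → i ≤ l - 2 → outdeg W (p ⟨i, hi⟩) = 1)
    (x : Fin n → ℝ) (hxpos : ∀ i, 0 < x i) (hxunit : ∑ i, (x i) ^ 2 = 1)
    (hxeig : Qmat W *ᵥ x = q W • x) :
    ∀ i : ℕ, ∀ _h1 : 1 ≤ i, ∀ _h2 : i + 1 ≤ l - 1,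
      x (p ⟨i, by omega⟩) < x (p ⟨i + 1, by omega⟩) := by
  intro i h1 h2
  have hln : l ≤ n := by simpa using Fintype.card_le_of_injective p hp
  have hn : 0 < n := by omega
  have hq2 : 2 < q W := by
    obtain ⟨v, hv⟩ : ∃ v, 2 ≤ outdeg W v := by
      by_contra hcon
      push_neg at hcon
      apply hnc
      apply iso_cyc_of_outdeg_one hsc hn
      intro u
      have hle := hcon u
      have hge : 1 ≤ outdeg W u := by
        obtain ⟨w, hw⟩ : ∃ w : Fin n, w ≠ u :=
          Fintype.exists_ne_of_one_lt_card (by simpa using (by omega : 1 < n)) u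
        rcases (hsc u w).cases_head with he | ⟨c, hc, _⟩
        · exact absurd he.symm hw
        · calc 1 ≤ W u c := Nat.one_le_iff_ne_zero.mpr hc
            _ ≤ outdeg W u :=
              Finset.single_le_sum (fun i _ => Nat.zero_le _) (Finset.mem_univ c)
      omega
    have hrow := row_eq hxeig v
    obtain ⟨j1, hj1⟩ := exists_neighbor (le_trans one_le_two hv)
    have hpos : 0 < ∑ j, (W v j : ℝ) * x j := by
      have h1' : (0 : ℝ) < (W v j1 : ℝ) * x j1 := by
        have : (1 : ℝ) ≤ (W v j1 : ℝ) := by exact_mod_cast Nat.one_le_iff_ne_zero.mpr hj1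
        nlinarith [hxpos j1]
      exact lt_of_lt_of_le h1' (Finset.single_le_sum
        (f := fun j => (W v j : ℝ) * x j)
        (fun j _ => mul_nonneg (Nat.cast_nonneg _) (hxpos j).le) (Finset.mem_univ j1))
    have hdv : (2 : ℝ) ≤ (outdeg W v : ℝ) := by exact_mod_cast hv
    have hvv : 2 * x v < q W * x v := by nlinarith [hxpos v]
    exact (mul_lt_mul_iff_of_pos_right (hxpos v)).mp hvv
  have hi1 : i < l := by omega
  have hi2 : i + 1 < l := by omega
  have key : x (p ⟨i, hi1⟩) < x (p ⟨i + 1, hi2⟩) := by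
    set a : Fin n := p ⟨i, hi1⟩ with ha
    have harc : W a (p ⟨i + 1, hi2⟩) ≠ 0 := hpath i hi2
    set b : Fin n := p ⟨i + 1, hi2⟩ with hb
    have hda : outdeg W a = 1 := hdeg i hi1 h1 (by omega)
    have hsum : ∑ j, (W a j : ℝ) * x j = x b := by
      rw [Finset.sum_eq_single b]
      · rw [outdeg_one_neighbor hda harc b, if_pos rfl]
        simp
      · intro k _ hk
        rw [outdeg_one_neighbor hda harc k, if_neg hk]
        simp
      · simp
    have hrow := row_eq hxeig a
    rw [hda, hsum] at hrow
    have hxb : x b = (q W - 1) * x a := by push_cast at hrow; linarith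
    rw [hxb]
    nlinarith [hxpos a]
  exact key


end SignlessDigraph
end
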